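/- Suppose f : ℝⁿ → ℝ is differentiable, x* satisfies ∇_i f(x*) = 0 for all i in T* := supp(x*), and f is strongly convex with modulus ℓ* > 0 on the ball N(x*) = {x : ‖x − x*‖ < ε*}, where ε* := min{ λ/(2‖∇_{T̄*} f(x*)‖), min_{i∈T*} |x*_i| } (with the first term interpreted as +∞ if ∇_{T̄*} f(x*) = 0). Then for every x ∈ N(x*) with x ≠ x*, f(x) + λ‖x‖₀ > f(x*) + λ‖x*‖₀; i.e., x* is a strict (isolated) local minimizer of f + λ‖·‖₀. -/

import Mathlib

open Classical Finset

noncomputable def norm0 {n : ℕ} (x : EuclideanSpace ℝ (Fin n)) : ℕ :=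
  (Finset.univ.filter fun i => x i ≠ 0).card

lemma abs_coord_le_norm {n : ℕ} (y : EuclideanSpace ℝ (Fin n)) (i : Fin n) :
    |y i| ≤ ‖y‖ := by
  rw [EuclideanSpace.norm_eq]
  calc |y i| = Real.sqrt (|y i| ^ 2) := (Real.sqrt_sq (abs_nonneg _)).symm
    _ ≤ _ := by
        apply Real.sqrt_le_sqrt
        have := Finset.single_le_sum (f := fun j => ‖y j‖ ^ 2)
          (fun j _ => by positivity) (Finset.mem_univ i)
        simpa [Real.norm_eq_abs] using this

theorem stmt6 {n : ℕ} (f : EuclideanSpace ℝ (Fin n) → ℝ)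
    (G : EuclideanSpace ℝ (Fin n) → EuclideanSpace ℝ (Fin n))
    (lam ℓs εs : ℝ) (hlam : 0 < lam) (hℓs : 0 < ℓs) (hεs : 0 < εs)
    (xs : EuclideanSpace ℝ (Fin n))
    (hgrad : ∀ x, HasGradientAt f (G x) x)
    (hstat : ∀ i, xs i ≠ 0 → G xs i = 0)
    -- `ε* ≤ min_{i ∈ T*} |x*_i|`
    (hε1 : ∀ i, xs i ≠ 0 → εs ≤ |xs i|)
    -- `ε* ≤ λ/(2‖∇_{T̄*} f(x*)‖)` (interpreted as no constraint if that gradient block vanishes)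
    (hε2 : 2 * ‖(show EuclideanSpace ℝ (Fin n) from
        WithLp.toLp 2 fun i => if xs i = 0 then G xs i else 0)‖ * εs ≤ lam)
    -- local strong convexity with modulus `ℓ*` on `N(x*)`
    (hconv : ∀ x z : EuclideanSpace ℝ (Fin n), ‖x - xs‖ < εs → ‖z - xs‖ < εs →
      f x + (inner ℝ (G x) (z - x) : ℝ) + (ℓs / 2) * ‖z - x‖ ^ 2 ≤ f z) :
    ∀ x : EuclideanSpace ℝ (Fin n), ‖x - xs‖ < εs → x ≠ xs →
      f xs + lam * (norm0 xs : ℝ) < f x + lam * (norm0 x : ℝ) := by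
  intro x hx hne
  set g : EuclideanSpace ℝ (Fin n) :=
    (show EuclideanSpace ℝ (Fin n) from WithLp.toLp 2 fun i => if xs i = 0 then G xs i else 0) with hg
  have hxs0 : ‖xs - xs‖ < εs := by simpa using hεs
  have hsc := hconv xs x hxs0 hx
  have hnormpos : 0 < ‖x - xs‖ := by
    rw [norm_pos_iff]; exact sub_ne_zero.mpr hne
  -- support of xs ⊆ support of x
  have hsupp : ∀ i, xs i ≠ 0 → x i ≠ 0 := by
    intro i hi hxi
    have h1 : |x i - xs i| ≤ ‖x - xs‖ := by
      simpa using abs_coord_le_norm (x - xs) i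
    have : |xs i| < εs := by
      rw [hxi] at h1
      calc |xs i| = |(0 : ℝ) - xs i| := by rw [zero_sub, abs_neg]
        _ ≤ ‖x - xs‖ := h1
        _ < εs := hx
    exact absurd (hε1 i hi) (not_le.mpr this)
  -- subset of supports
  have hsubset : (Finset.univ.filter fun i => xs i ≠ 0) ⊆
      (Finset.univ.filter fun i => x i ≠ 0) := by
    intro i hi
    simp only [Finset.mem_filter, Finset.mem_univ, true_and] at *
    exact hsupp i hi
  -- inner product rewrite
  have hinner : (inner ℝ (G xs) (x - xs) : ℝ) = (inner ℝ g (x - xs) : ℝ) := by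
    simp only [PiLp.inner_apply, RCLike.inner_apply, conj_trivial]
    apply Finset.sum_congr rfl
    intro i _
    by_cases hxi : xs i = 0
    · simp [hg, hxi]
    · simp [hg, hxi, hstat i hxi]
  by_cases hcase : ∀ i, xs i = 0 → x i = 0
  · -- same support: inner term vanishes, norm0 equal
    have hinner0 : (inner ℝ (G xs) (x - xs) : ℝ) = 0 := by
      rw [hinner]
      simp only [PiLp.inner_apply, RCLike.inner_apply, conj_trivial]
      apply Finset.sum_eq_zero
      intro i _
      by_cases hxi : xs i = 0
      · have : x i = 0 := hcase i hxi
        simp [PiLp.sub_apply, hxi, this]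
      · simp [hg, hxi]
    have hn0 : norm0 x = norm0 xs := by
      unfold norm0
      congr 1
      apply Finset.filter_congr
      intro i _
      constructor
      · intro h; by_contra h'
        exact h (hcase i h')
      · exact fun h => hsupp i h
    have : f xs + (ℓs / 2) * ‖x - xs‖ ^ 2 ≤ f x := by
      rw [hinner0] at hsc; linarith
    have hpos : 0 < (ℓs / 2) * ‖x - xs‖ ^ 2 := by positivity
    rw [hn0]; linarith
  · -- strictly bigger support
    push_neg at hcase
    obtain ⟨i₀, hxi₀, hxne⟩ := hcase
    have hssub : (Finset.univ.filter fun i => xs i ≠ 0) ⊂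
        (Finset.univ.filter fun i => x i ≠ 0) := by
      refine ⟨hsubset, fun h => ?_⟩
      have := h (by simp [hxne] : i₀ ∈ Finset.univ.filter fun i => x i ≠ 0)
      simp [hxi₀] at this
    have hcard : norm0 xs + 1 ≤ norm0 x := Finset.card_lt_card hssub
    -- inner bound
    have hib : -(lam / 2) ≤ (inner ℝ (G xs) (x - xs) : ℝ) := by
      rw [hinner]
      have h1 : |(inner ℝ g (x - xs) : ℝ)| ≤ ‖g‖ * ‖x - xs‖ := abs_real_inner_le_norm g (x - xs)
      have h2 : ‖g‖ * ‖x - xs‖ ≤ ‖g‖ * εs :=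
        mul_le_mul_of_nonneg_left (le_of_lt hx) (norm_nonneg g)
      have h3 : 2 * ‖g‖ * εs ≤ lam := hε2
      have := neg_abs_le (inner ℝ g (x - xs) : ℝ)
      nlinarith
    have hcard' : (norm0 xs : ℝ) + 1 ≤ (norm0 x : ℝ) := by exact_mod_cast hcard
    have hpos : 0 < (ℓs / 2) * ‖x - xs‖ ^ 2 := by positivity
    nlinarith
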